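/- Let c ∈ ℝ and let f be holomorphic on the half-plane {z ∈ ℂ : Im z < c} with |f'(z) − 1| < 1/4 and |f(z) − (z + 1)| < 1/4 for all z there. Define h₁ : (0,1) × (−∞, c) → ℂ by h₁(x, y) = (1 − x)·(iy) + x·f(iy). Then h₁ is injective and continuous, hence a homeomorphism onto its image h₁((0,1) × (−∞, c)) ⊆ ℂ. -/

import Mathlib

set_option maxHeartbeats 1600000

open Complex Set

/-- `h₁(x, y) = (1 - x)·(iy) + x·f(iy)`: for fixed `y`, the parameterization of the
straight line segment from `iy` to `f(iy)`. -/
noncomputable def hOne (f : ℂ → ℂ) (q : ℝ × ℝ) : ℂ :=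
  (1 - (q.1 : ℂ)) * ((q.2 : ℂ) * Complex.I) + (q.1 : ℂ) * f ((q.2 : ℂ) * Complex.I)

private lemma hOne_arith (x₁ x₂ y₁ y₂ a₁ a₂ b₁ b₂ u₁ u₂ v₁ v₂ D : ℝ)
    (hx₁ : 0 ≤ x₁) (hx₁' : x₁ ≤ 1) (hx₂ : 0 ≤ x₂) (hx₂' : x₂ ≤ 1)
    (ha₁ : 3/4 ≤ a₁) (ha₁' : a₁ ≤ 5/4) (ha₂ : 3/4 ≤ a₂) (ha₂' : a₂ ≤ 5/4)
    (hb₁ : |b₁| ≤ 1/4)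
    (hDa : |a₂ - a₁| ≤ (1/4) * |y₂ - y₁|) (hDb : |b₂ - b₁| ≤ (1/4) * |y₂ - y₁|)
    (hu₁ : u₁ = x₁ * a₁) (hu₂ : u₂ = x₂ * a₂)
    (hv₁ : v₁ = y₁ + x₁ * b₁) (hv₂ : v₂ = y₂ + x₂ * b₂)
    (hU : |u₂ - u₁| ≤ D) (hV : |v₂ - v₁| ≤ D) :
    max |x₂ - x₁| |y₂ - y₁| ≤ 5 * D := by
  set Δ := |y₂ - y₁| with hΔ
  have hΔ0 : 0 ≤ Δ := abs_nonneg _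
  have hD0 : 0 ≤ D := le_trans (abs_nonneg _) hU
  have e1 : (x₂ - x₁) * (a₁ * a₂) = (u₂ - u₁) * a₁ - (x₁ * a₁) * (a₂ - a₁) := by
    rw [hu₁, hu₂]; ring
  have h2 : |x₂ - x₁| * (a₁ * a₂) ≤ |u₂ - u₁| * (5/4) + (5/4) * ((1/4) * Δ) := by
    have hpos : (0:ℝ) < a₁ * a₂ := by nlinarith
    have : |x₂ - x₁| * (a₁ * a₂) = |(x₂ - x₁) * (a₁ * a₂)| := by
      rw [abs_mul, abs_of_pos hpos]
    rw [this, e1]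
    calc |(u₂ - u₁) * a₁ - x₁ * a₁ * (a₂ - a₁)|
        ≤ |(u₂ - u₁) * a₁| + |x₁ * a₁ * (a₂ - a₁)| := abs_sub _ _
      _ = |u₂ - u₁| * |a₁| + |x₁ * a₁| * |a₂ - a₁| := by rw [abs_mul, abs_mul]
      _ ≤ |u₂ - u₁| * (5/4) + (5/4) * ((1/4) * Δ) := by
          have h₁ : |a₁| = a₁ := abs_of_pos (by linarith)
          have h₂ : |x₁ * a₁| = x₁ * a₁ := abs_of_nonneg (by nlinarith)
          rw [h₁, h₂]
          have h3 : x₁ * a₁ ≤ 5/4 := by nlinarith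
          have t1 : |u₂ - u₁| * a₁ ≤ |u₂ - u₁| * (5/4) :=
            mul_le_mul_of_nonneg_left ha₁' (abs_nonneg _)
          have t2 : x₁ * a₁ * |a₂ - a₁| ≤ (5/4) * ((1/4) * Δ) :=
            mul_le_mul h3 hDa (abs_nonneg _) (by norm_num)
          linarith
  have hA : |x₂ - x₁| ≤ (20/9) * |u₂ - u₁| + (5/9) * Δ := by
    have h916 : (9:ℝ)/16 ≤ a₁ * a₂ := by nlinarith
    have := mul_le_mul_of_nonneg_left h916 (abs_nonneg (x₂ - x₁))
    linarith
  have hB : |x₂ * b₂ - x₁ * b₁| ≤ (5/9) * |u₂ - u₁| + (7/18) * Δ := by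
    calc |x₂ * b₂ - x₁ * b₁| = |x₂ * (b₂ - b₁) + (x₂ - x₁) * b₁| := by ring_nf
      _ ≤ |x₂ * (b₂ - b₁)| + |(x₂ - x₁) * b₁| := abs_add_le _ _
      _ = |x₂| * |b₂ - b₁| + |x₂ - x₁| * |b₁| := by rw [abs_mul, abs_mul]
      _ ≤ 1 * ((1/4) * Δ) + ((20/9) * |u₂ - u₁| + (5/9) * Δ) * (1/4) := by
          have h₂ : |x₂| = x₂ := abs_of_nonneg hx₂
          rw [h₂]
          have := abs_nonneg (b₂ - b₁)
          have := abs_nonneg b₁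
          have := abs_nonneg (x₂ - x₁)
          nlinarith
      _ ≤ (5/9) * |u₂ - u₁| + (7/18) * Δ := by linarith
  have hC : Δ ≤ 2 * |v₂ - v₁| + |u₂ - u₁| := by
    have e2 : y₂ - y₁ = (v₂ - v₁) - (x₂ * b₂ - x₁ * b₁) := by rw [hv₁, hv₂]; ring
    have : Δ ≤ |v₂ - v₁| + |x₂ * b₂ - x₁ * b₁| := by
      rw [hΔ, e2]; exact abs_sub _ _
    linarith [abs_nonneg (u₂ - u₁), abs_nonneg (v₂ - v₁)]
  have hD : |x₂ - x₁| ≤ 3 * |u₂ - u₁| + 2 * |v₂ - v₁| := by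
    linarith [abs_nonneg (u₂ - u₁), abs_nonneg (v₂ - v₁)]
  apply max_le
  · linarith
  · linarith

private lemma gg_lip (c : ℝ) (f : ℂ → ℂ)
    (hf : DifferentiableOn ℂ f {z : ℂ | z.im < c})
    (hder : ∀ z : ℂ, z.im < c → ‖deriv f z - 1‖ < 1/4) :
    ∀ y₁ ∈ Set.Iio c, ∀ y₂ ∈ Set.Iio c,
      ‖(f ((y₂:ℂ) * I) - ((y₂:ℂ) * I + 1)) - (f ((y₁:ℂ) * I) - ((y₁:ℂ) * I + 1))‖
        ≤ (1/4) * |y₂ - y₁| := by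
  intro y₁ hy₁ y₂ hy₂
  have hopen : IsOpen {z : ℂ | z.im < c} := isOpen_lt Complex.continuous_im continuous_const
  have key : ∀ y ∈ Set.Iio c,
      HasDerivWithinAt (fun y : ℝ => f ((y:ℂ) * I) - ((y:ℂ) * I + 1))
        ((deriv f ((y:ℂ) * I) - 1) * I) (Set.Iio c) y := by
    intro y hy
    have hmem : ((y:ℂ) * I).im < c := by simpa using hy
    have h1 : HasDerivAt f (deriv f ((y:ℂ) * I)) ((y:ℂ) * I) :=
      (hf.differentiableAt (hopen.mem_nhds hmem)).hasDerivAt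
    have h2 : HasDerivAt (fun z : ℂ => z * I) I (y:ℂ) := by
      simpa using (hasDerivAt_id ((y:ℂ))).mul_const I
    have h3 : HasDerivAt (fun z : ℂ => f (z * I)) (deriv f ((y:ℂ) * I) * I) (y:ℂ) := by
      exact HasDerivAt.comp (y:ℂ) h1 h2
    have h4 : HasDerivAt (fun z : ℂ => z * I + 1) I (y:ℂ) := by
      simpa using h2.add_const 1
    have h5 : HasDerivAt (fun z : ℂ => f (z * I) - (z * I + 1))
        (deriv f ((y:ℂ) * I) * I - I) (y:ℂ) := h3.sub h4
    have h6 := h5.comp_ofReal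
    have : deriv f ((y:ℂ) * I) * I - I = (deriv f ((y:ℂ) * I) - 1) * I := by ring
    rw [this] at h6
    exact h6.hasDerivWithinAt
  have hbound : ∀ y ∈ Set.Iio c, ‖(deriv f ((y:ℂ) * I) - 1) * I‖ ≤ 1/4 := by
    intro y hy
    have hmem : ((y:ℂ) * I).im < c := by simpa using hy
    have := (hder _ hmem).le
    rw [norm_mul]
    simpa using this
  have := Convex.norm_image_sub_le_of_norm_hasDerivWithin_le key hbound (convex_Iio c) hy₁ hy₂
  simpa [Real.norm_eq_abs] using this

/-- Let `f` be holomorphic on `{Im z < c}` with `|f'(z) - 1| < 1/4`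
and `|f(z) - (z+1)| < 1/4` there. Then `h₁(x, y) = (1-x)·(iy) + x·f(iy)` is injective
and continuous on `(0,1) × (-∞, c)`, hence a homeomorphism onto its image. -/
theorem hOne_injective_continuous_homeomorph (c : ℝ) (f : ℂ → ℂ)
    (hf : DifferentiableOn ℂ f {z : ℂ | z.im < c})
    (hder : ∀ z : ℂ, z.im < c → ‖deriv f z - 1‖ < 1/4)
    (hval : ∀ z : ℂ, z.im < c → ‖f z - (z + 1)‖ < 1/4) :
    Set.InjOn (hOne f) (Set.Ioo (0:ℝ) 1 ×ˢ Set.Iio c) ∧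
    ContinuousOn (hOne f) (Set.Ioo (0:ℝ) 1 ×ˢ Set.Iio c) ∧
    ∃ e : (Set.Ioo (0:ℝ) 1 ×ˢ Set.Iio c : Set (ℝ × ℝ)) ≃ₜ
        (hOne f '' (Set.Ioo (0:ℝ) 1 ×ˢ Set.Iio c) : Set ℂ),
      ∀ q : (Set.Ioo (0:ℝ) 1 ×ˢ Set.Iio c : Set (ℝ × ℝ)), (e q : ℂ) = hOne f q := by
  set s : Set (ℝ × ℝ) := Set.Ioo (0:ℝ) 1 ×ˢ Set.Iio c with hs
  set g : ℝ → ℂ := fun y => f ((y:ℂ) * I) - ((y:ℂ) * I + 1) with hg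
  -- basic facts about g
  have hgsmall : ∀ y : ℝ, y < c → ‖g y‖ ≤ 1/4 := by
    intro y hy
    have hmem : ((y:ℂ) * I).im < c := by simpa using hy
    have := (hval _ hmem).le
    rw [hg]
    simpa using this
  have hglip := gg_lip c f hf hder
  -- rewriting hOne
  have hrw : ∀ x y : ℝ, hOne f (x, y) = (y:ℂ) * I + (x:ℂ) * (1 + g y) := by
    intro x y
    simp only [hOne, hg]
    ring
  have hre : ∀ x y : ℝ, (hOne f (x, y)).re = x * (1 + (g y).re) := by
    intro x y; rw [hrw]; simp [hg]
  have him : ∀ x y : ℝ, (hOne f (x, y)).im = y + x * (g y).im := by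
    intro x y; rw [hrw]; simp [hg]
  -- bounds on re/im of g
  have hare : ∀ y : ℝ, y < c → 3/4 ≤ 1 + (g y).re ∧ 1 + (g y).re ≤ 5/4 := by
    intro y hy
    have h1 : |(g y).re| ≤ 1/4 := le_trans (Complex.abs_re_le_norm _)
      (by exact hgsmall y hy)
    rw [abs_le] at h1
    constructor <;> linarith [h1.1, h1.2]
  have haim : ∀ y : ℝ, y < c → |(g y).im| ≤ 1/4 := by
    intro y hy
    exact le_trans (Complex.abs_im_le_norm _)
      (by exact hgsmall y hy)
  -- the key Lipschitz-inverse estimate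
  have hkey : ∀ p ∈ s, ∀ q ∈ s, dist p q ≤ 5 * dist (hOne f p) (hOne f q) := by
    rintro ⟨x₁, y₁⟩ ⟨hx₁, hy₁⟩ ⟨x₂, y₂⟩ ⟨hx₂, hy₂⟩
    simp only [Set.mem_Ioo, Set.mem_Iio] at hx₁ hy₁ hx₂ hy₂
    set D := dist (hOne f (x₁, y₁)) (hOne f (x₂, y₂)) with hD
    have hUb : |(hOne f (x₂, y₂)).re - (hOne f (x₁, y₁)).re| ≤ D := by
      rw [hD, dist_comm, Complex.dist_eq, ← Complex.sub_re]
      exact Complex.abs_re_le_norm _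
    have hVb : |(hOne f (x₂, y₂)).im - (hOne f (x₁, y₁)).im| ≤ D := by
      rw [hD, dist_comm, Complex.dist_eq, ← Complex.sub_im]
      exact Complex.abs_im_le_norm _
    have hdga : |(1 + (g y₂).re) - (1 + (g y₁).re)| ≤ (1/4) * |y₂ - y₁| := by
      have h := hglip y₁ hy₁ y₂ hy₂
      have : |(g y₂ - g y₁).re| ≤ ‖g y₂ - g y₁‖ := by
        exact Complex.abs_re_le_norm _
      simp only [Complex.sub_re] at this
      have : |(g y₂).re - (g y₁).re| ≤ (1/4) * |y₂ - y₁| := le_trans this h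
      convert this using 2; ring
    have hdgb : |(g y₂).im - (g y₁).im| ≤ (1/4) * |y₂ - y₁| := by
      have h := hglip y₁ hy₁ y₂ hy₂
      have : |(g y₂ - g y₁).im| ≤ ‖g y₂ - g y₁‖ := by
        exact Complex.abs_im_le_norm _
      simp only [Complex.sub_im] at this
      exact le_trans this h
    have main := hOne_arith x₁ x₂ y₁ y₂ (1 + (g y₁).re) (1 + (g y₂).re)
      ((g y₁).im) ((g y₂).im)
      ((hOne f (x₁, y₁)).re) ((hOne f (x₂, y₂)).re)
      ((hOne f (x₁, y₁)).im) ((hOne f (x₂, y₂)).im) D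
      hx₁.1.le hx₁.2.le hx₂.1.le hx₂.2.le
      (hare y₁ hy₁).1 (hare y₁ hy₁).2 (hare y₂ hy₂).1 (hare y₂ hy₂).2
      (haim y₁ hy₁) hdga hdgb (hre x₁ y₁) (hre x₂ y₂) (him x₁ y₁) (him x₂ y₂) hUb hVb
    rw [Prod.dist_eq]
    simp only [Real.dist_eq]
    calc max |x₁ - x₂| |y₁ - y₂| = max |x₂ - x₁| |y₂ - y₁| := by
          rw [abs_sub_comm x₁ x₂, abs_sub_comm y₁ y₂]
      _ ≤ 5 * D := main
  -- injectivity
  have hinj : Set.InjOn (hOne f) s := by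
    intro p hp q hq hpq
    have := hkey p hp q hq
    rw [hpq] at this
    simp only [dist_self, mul_zero] at this
    exact dist_le_zero.mp this
  -- continuity
  have hcont : ContinuousOn (hOne f) s := by
    have hmap : ContinuousOn (fun q : ℝ × ℝ => f ((q.2:ℂ) * I)) s := by
      apply hf.continuousOn.comp
      · exact (Continuous.mul (Complex.continuous_ofReal.comp continuous_snd)
          continuous_const).continuousOn
      · rintro ⟨x, y⟩ ⟨hx, hy⟩
        simpa using hy
    apply ContinuousOn.add
    · exact ((continuous_const.sub
        (Complex.continuous_ofReal.comp continuous_fst)).mul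
        ((Complex.continuous_ofReal.comp continuous_snd).mul continuous_const)).continuousOn
    · exact ContinuousOn.mul
        (Complex.continuous_ofReal.comp continuous_fst).continuousOn hmap
  refine ⟨hinj, hcont, ?_⟩
  -- the homeomorphism
  let e₀ : s ≃ (hOne f '' s : Set ℂ) := Equiv.Set.imageOfInjOn (hOne f) s hinj
  have he₀ : ∀ q : s, (e₀ q : ℂ) = hOne f q := fun q => rfl
  have hcf : Continuous fun q : s => e₀ q := by
    apply Continuous.subtype_mk
    exact hcont.restrict
  have hci : Continuous fun w : (hOne f '' s : Set ℂ) => e₀.symm w := by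
    have hlip : LipschitzWith 5 (fun w : (hOne f '' s : Set ℂ) => e₀.symm w) := by
      apply LipschitzWith.of_dist_le_mul
      intro w₁ w₂
      have h₁ : hOne f (e₀.symm w₁) = (w₁ : ℂ) := by
        have := he₀ (e₀.symm w₁)
        rw [Equiv.apply_symm_apply] at this
        exact this.symm
      have h₂ : hOne f (e₀.symm w₂) = (w₂ : ℂ) := by
        have := he₀ (e₀.symm w₂)
        rw [Equiv.apply_symm_apply] at this
        exact this.symm
      have := hkey (e₀.symm w₁) (e₀.symm w₁).2 (e₀.symm w₂) (e₀.symm w₂).2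
      rw [h₁, h₂] at this
      rw [Subtype.dist_eq, Subtype.dist_eq]
      simpa using this
    exact hlip.continuous
  exact ⟨{ toEquiv := e₀, continuous_toFun := hcf, continuous_invFun := hci }, he₀⟩
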